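/- Let M1 < M2 be coprime positive integers, let D_cp = {m M2 : 0 ≤ m ≤ 2M1−1} ∪ {m M1 : 1 ≤ m ≤ M2−1} be the co-prime array position set, and let n be an integer with 1 ≤ n ≤ M2−1. Then at the grating-lobe point Δ = 2n/M2, the array sum is exactly Σ_{d∈D_cp} exp(iπ d Δ) = 2M1 − 1; consequently the side lobe height is G(Δ; D_cp) = (2M1−1)²/M² where M = 2M1 + M2 − 1. -/

import Mathlib

open Finset

/-- Co-prime array position set. -/
def Dcp (M1 M2 : ℕ) : Finset ℕ :=
  (Finset.range (2 * M1)).image (fun m => m * M2) ∪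
    (Finset.Icc 1 (M2 - 1)).image (fun m => m * M1)

set_option maxHeartbeats 1600000 in
/-- at the grating-lobe point `Δ = 2n/M2` with `1 ≤ n ≤ M2−1`, the
co-prime array sum equals `2M1 − 1`; hence the side lobe height is
`(2M1−1)²/M²` with `M = 2M1 + M2 − 1`. -/
theorem coprime_grating_lobe_subarray1 (M1 M2 : ℕ) (h0 : 0 < M1) (h12 : M1 < M2)
    (hc : Nat.Coprime M1 M2) (n : ℕ) (hn1 : 1 ≤ n) (hn2 : n ≤ M2 - 1) :
    (∑ d ∈ Dcp M1 M2,
        Complex.exp (Complex.I * Real.pi * (d : ℝ) * (2 * (n : ℝ) / (M2 : ℝ)))) =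
      (2 * (M1 : ℂ) - 1) ∧
    (1 / (2 * (M1 : ℝ) + (M2 : ℝ) - 1) ^ 2) *
        (‖∑ d ∈ Dcp M1 M2,
          Complex.exp (Complex.I * Real.pi * (d : ℝ) * (2 * (n : ℝ) / (M2 : ℝ)))‖) ^ 2 =
      (2 * (M1 : ℝ) - 1) ^ 2 / (2 * (M1 : ℝ) + (M2 : ℝ) - 1) ^ 2 := by
  have hM2pos : 0 < M2 := lt_trans h0 h12
  have hM2C : (M2 : ℂ) ≠ 0 := by exact_mod_cast hM2pos.ne'
  have hpi : (Real.pi : ℂ) ≠ 0 := by exact_mod_cast Real.pi_ne_zero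
  have hne2πI : (2 * (Real.pi : ℂ) * Complex.I) ≠ 0 :=
    mul_ne_zero (mul_ne_zero two_ne_zero hpi) Complex.I_ne_zero
  -- disjointness of the two pieces
  have hdisj : Disjoint ((Finset.range (2 * M1)).image (fun m => m * M2))
      ((Finset.Icc 1 (M2 - 1)).image (fun m => m * M1)) := by
    rw [Finset.disjoint_left]
    rintro x hx hy
    simp only [Finset.mem_image, Finset.mem_range, Finset.mem_Icc] at hx hy
    obtain ⟨m, hm, rfl⟩ := hx
    obtain ⟨k, ⟨hk1, hk2⟩, hk⟩ := hy
    have hdvd : M2 ∣ k * M1 := ⟨m, by rw [hk, Nat.mul_comm]⟩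
    have : M2 ∣ k := (Nat.Coprime.dvd_of_dvd_mul_right hc.symm) hdvd
    have := Nat.le_of_dvd (by omega) this
    omega
  have hsum : (∑ d ∈ Dcp M1 M2,
      Complex.exp (Complex.I * Real.pi * (d : ℝ) * (2 * (n : ℝ) / (M2 : ℝ))))
      = (2 * (M1 : ℂ) - 1) := by
    rw [Dcp, Finset.sum_union hdisj]
    -- first sum
    have h1 : (∑ d ∈ (Finset.range (2 * M1)).image (fun m => m * M2),
        Complex.exp (Complex.I * Real.pi * (d : ℝ) * (2 * (n : ℝ) / (M2 : ℝ))))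
        = 2 * (M1 : ℂ) := by
      rw [Finset.sum_image (by intro a _ b _ h; exact Nat.eq_of_mul_eq_mul_right hM2pos h)]
      have hterm : ∀ m ∈ Finset.range (2 * M1),
          Complex.exp (Complex.I * Real.pi * ((m * M2 : ℕ) : ℝ) * (2 * (n : ℝ) / (M2 : ℝ)))
            = 1 := by
        intro m _
        have harg : Complex.I * Real.pi * (((m * M2 : ℕ) : ℝ) : ℂ) * (2 * (n : ℝ) / (M2 : ℝ))
            = ((m * n : ℕ) : ℤ) * (2 * Real.pi * Complex.I) := by
          push_cast
          field_simp
        rw [harg, Complex.exp_int_mul_two_pi_mul_I]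
      rw [Finset.sum_congr rfl hterm, Finset.sum_const, Finset.card_range]
      push_cast
      ring
    -- second sum: geometric
    have h2 : (∑ d ∈ (Finset.Icc 1 (M2 - 1)).image (fun m => m * M1),
        Complex.exp (Complex.I * Real.pi * (d : ℝ) * (2 * (n : ℝ) / (M2 : ℝ))))
        = -1 := by
      rw [Finset.sum_image (by intro a _ b _ h; exact Nat.eq_of_mul_eq_mul_right h0 h)]
      set ζ : ℂ := Complex.exp (2 * Real.pi * Complex.I * ((M1 * n : ℕ) : ℝ) / (M2 : ℝ))
        with hζ
      have hterm : ∀ k ∈ Finset.Icc 1 (M2 - 1),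
          Complex.exp (Complex.I * Real.pi * ((k * M1 : ℕ) : ℝ) * (2 * (n : ℝ) / (M2 : ℝ)))
            = ζ ^ k := by
        intro k _
        rw [hζ, ← Complex.exp_nat_mul]
        congr 1
        push_cast
        field_simp
      rw [Finset.sum_congr rfl hterm]
      have hζM2 : ζ ^ M2 = 1 := by
        rw [hζ, ← Complex.exp_nat_mul]
        have : (M2 : ℂ) * (2 * Real.pi * Complex.I * (((M1 * n : ℕ) : ℝ) : ℂ) / (M2 : ℝ))
            = ((M1 * n : ℕ) : ℤ) * (2 * Real.pi * Complex.I) := by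
          push_cast
          field_simp
        rw [this, Complex.exp_int_mul_two_pi_mul_I]
      have hζne : ζ ≠ 1 := by
        intro hone
        rw [hζ, Complex.exp_eq_one_iff] at hone
        obtain ⟨j, hj⟩ := hone
        field_simp at hj
        have key : (((M1 * n : ℕ) : ℤ) : ℂ) = ((j * M2 : ℤ) : ℂ) := by
          apply mul_left_cancel₀ hne2πI
          push_cast
          rw [div_eq_iff (by exact_mod_cast hM2pos.ne')] at hj
          push_cast at hj
          linear_combination (2 * (Real.pi : ℂ) * Complex.I) * hj
        have hj'' : ((M1 * n : ℕ) : ℤ) = j * M2 := by exact_mod_cast key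
        have hdvd : (M2 : ℤ) ∣ ((M1 * n : ℕ) : ℤ) := ⟨j, by rw [hj'']; ring⟩
        have hdvdN : M2 ∣ M1 * n := by exact_mod_cast hdvd
        have : M2 ∣ n := (Nat.Coprime.dvd_of_dvd_mul_left hc.symm) hdvdN
        have := Nat.le_of_dvd (by omega) this
        omega
      have hrange : Finset.range M2 = insert 0 (Finset.Icc 1 (M2 - 1)) := by
        ext x
        simp only [Finset.mem_range, Finset.mem_insert, Finset.mem_Icc]
        omega
      have hgeom : (∑ k ∈ Finset.range M2, ζ ^ k) = 0 := by
        rw [geom_sum_eq hζne, hζM2]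
        simp
      rw [hrange, Finset.sum_insert (by simp)] at hgeom
      linear_combination hgeom
    rw [h1, h2]
    ring
  refine ⟨hsum, ?_⟩
  rw [hsum]
  have habs : ‖(2 * (M1 : ℂ) - 1)‖ = |2 * (M1 : ℝ) - 1| := by
    rw [show (2 * (M1 : ℂ) - 1) = ((2 * (M1 : ℝ) - 1 : ℝ) : ℂ) by push_cast; ring,
      Complex.norm_real, Real.norm_eq_abs]
  rw [habs, sq_abs]
  ring
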